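/- Let L be a q-linearized polynomial over F_q of q-degree n with L(x)/x irreducible over F_q, root space V in splitting field E, and let ε_r : H_{n,r}(F_q) → E be the evaluation map sending a homogeneous polynomial of degree r in n variables to its value at the basis (α, α^q, ..., α^{q^{n−1}}) for a nonzero root α. Then ε_r is injective for 1 ≤ r ≤ q − 1. -/

import Mathlib

open Polynomial

private lemma digits_sum_lt_pow (q : ℕ) (hq : 2 ≤ q) :
    ∀ (n : ℕ) (d : Fin n → ℕ), (∀ i, d i < q) → (∑ i, d i * q ^ (i : ℕ)) < q ^ n := by
  intro n
  induction n with
  | zero => intro d _; simpa using Nat.one_pos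
  | succ n ih =>
    intro d hd
    rw [Fin.sum_univ_succ]
    have hrw : ∀ i : Fin n, d i.succ * q ^ ((i.succ : Fin (n+1)) : ℕ)
        = (d i.succ * q ^ (i : ℕ)) * q := by
      intro i
      rw [Fin.val_succ, pow_succ, mul_assoc]
    rw [Finset.sum_congr rfl (fun i _ => hrw i), ← Finset.sum_mul]
    set A := ∑ i : Fin n, d i.succ * q ^ (i : ℕ) with hA
    have hAlt : A < q ^ n := ih (fun i => d i.succ) (fun i => hd i.succ)
    have h0 : d 0 * q ^ ((0 : Fin (n+1)) : ℕ) = d 0 := by simp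
    rw [h0]
    calc d 0 + A * q < q + A * q := by
          have := hd 0; omega
      _ = (A + 1) * q := by ring
      _ ≤ q ^ n * q := Nat.mul_le_mul_right q hAlt
      _ = q ^ (n + 1) := (pow_succ q n).symm

private lemma digits_inj (q : ℕ) (hq : 2 ≤ q) :
    ∀ (n : ℕ) (d e : Fin n → ℕ), (∀ i, d i < q) → (∀ i, e i < q) →
      (∑ i, d i * q ^ (i : ℕ)) = (∑ i, e i * q ^ (i : ℕ)) → d = e := by
  intro n
  induction n with
  | zero => intro d e _ _ _; funext i; exact i.elim0
  | succ n ih =>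
    intro d e hd he hsum
    have hrw : ∀ (f : Fin (n+1) → ℕ),
        (∑ i, f i * q ^ (i : ℕ)) = f 0 + (∑ i : Fin n, f i.succ * q ^ (i : ℕ)) * q := by
      intro f
      rw [Fin.sum_univ_succ]
      congr 1
      · simp
      · rw [Finset.sum_mul]
        refine Finset.sum_congr rfl fun i _ => ?_
        rw [Fin.val_succ, pow_succ, mul_assoc]
    rw [hrw d, hrw e] at hsum
    set A := ∑ i : Fin n, d i.succ * q ^ (i : ℕ) with hA
    set B := ∑ i : Fin n, e i.succ * q ^ (i : ℕ) with hB
    have h0 : d 0 = e 0 := by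
      have h1 : (d 0 + A * q) % q = d 0 := by
        rw [Nat.add_mul_mod_self_right]
        exact Nat.mod_eq_of_lt (hd 0)
      have h2 : (e 0 + B * q) % q = e 0 := by
        rw [Nat.add_mul_mod_self_right]
        exact Nat.mod_eq_of_lt (he 0)
      rw [← h1, ← h2, hsum]
    have hAB : A = B := by
      have hq0 : 0 < q := by omega
      have : A * q = B * q := by omega
      exact Nat.eq_of_mul_eq_mul_right hq0 this
    have htail : (fun i : Fin n => d i.succ) = (fun i : Fin n => e i.succ) :=
      ih _ _ (fun i => hd i.succ) (fun i => he i.succ) (by rw [← hA, ← hB, hAB])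
    funext i
    refine Fin.cases h0 (fun j => ?_) i
    exact congrFun htail j

/-- The evaluation map on homogeneous polynomials of degree `r`, at the
basis `(α, α^q, ..., α^{q^(n-1)})` of the root space, is injective for `1 ≤ r ≤ q - 1`. -/
theorem stmt_11 (p a q n : ℕ) [Fact p.Prime] (ha : 0 < a) (hq : q = p ^ a)
    (Fq E : Type) [Field Fq] [Fintype Fq] (hFq : Fintype.card Fq = q)
    [Field E] [Algebra Fq E]
    (c : ℕ → Fq) (hn : c n ≠ 0)
    (L : Polynomial Fq) (hL : L = ∑ i ∈ Finset.range (n + 1), C (c i) * X ^ q ^ i)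
    (M : Polynomial Fq) (hM : L = X * M) (hirr : Irreducible M)
    (hsplit : L.IsSplittingField Fq E)
    (α : E) (hα : α ≠ 0) (hroot : aeval α L = 0) :
    ∀ r : ℕ, 1 ≤ r → r ≤ q - 1 →
      ∀ P ∈ MvPolynomial.homogeneousSubmodule (Fin n) Fq r,
        MvPolynomial.aeval (fun i : Fin n => α ^ q ^ (i : ℕ)) P = 0 → P = 0 := by
  intro r hr1 hrq P hPmem hPeval
  have hq2 : 2 ≤ q := by
    subst hq
    exact Nat.one_lt_pow (by omega) (Fact.out : p.Prime).one_lt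
  have hP : P.IsHomogeneous r := (MvPolynomial.mem_homogeneousSubmodule _ _).mp hPmem
  by_contra hP0
  obtain ⟨d₀, hd₀⟩ : ∃ d, d ∈ P.support := (MvPolynomial.support_nonempty.mpr hP0).exists_mem
  -- each monomial in the support has digit sum r
  have hdeg : ∀ d ∈ P.support, ∑ i ∈ d.support, d i = r := by
    intro d hd
    have := hP (MvPolynomial.mem_support_iff.mp hd)
    rw [Finsupp.weight_apply] at this
    simpa [Finsupp.sum] using this
  have hlt : ∀ d ∈ P.support, ∀ i : Fin n, d i < q := by
    intro d hd i
    have hsum := hdeg d hd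
    have hle : d i ≤ r := by
      by_cases hi : i ∈ d.support
      · exact hsum ▸ Finset.single_le_sum (fun _ _ => Nat.zero_le _) hi
      · simp [Finsupp.notMem_support_iff.mp hi]
    omega
  -- the exponent map
  set e : (Fin n →₀ ℕ) → ℕ := fun d => ∑ i : Fin n, d i * q ^ (i : ℕ) with he
  set Q : Polynomial Fq :=
    ∑ d ∈ P.support, Polynomial.C (MvPolynomial.coeff d P) * Polynomial.X ^ e d with hQ
  have einj : ∀ d ∈ P.support, ∀ d' ∈ P.support, e d = e d' → d = d' := by
    intro d hd d' hd' hee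
    have := digits_inj q hq2 n (fun i => d i) (fun i => d' i) (hlt d hd) (hlt d' hd') hee
    ext i
    exact congrFun this i
  have hQcoeff : Q.coeff (e d₀) = MvPolynomial.coeff d₀ P := by
    rw [hQ, Polynomial.finset_sum_coeff]
    rw [Finset.sum_eq_single d₀]
    · simp [Polynomial.coeff_C_mul, Polynomial.coeff_X_pow]
    · intro d hd hne
      have hne' : e d₀ ≠ e d := fun h => hne (einj d hd d₀ hd₀ h.symm)
      simp [Polynomial.coeff_C_mul, Polynomial.coeff_X_pow, hne']
    · intro h; exact absurd hd₀ h
  have hQne : Q ≠ 0 := by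
    intro h
    exact (MvPolynomial.mem_support_iff.mp hd₀) (by rw [← hQcoeff, h, Polynomial.coeff_zero])
  -- evaluation of Q at α equals evaluation of P
  have hprod : ∀ d ∈ P.support,
      (∏ i ∈ d.support, (α ^ q ^ (i : ℕ)) ^ d i) = α ^ e d := by
    intro d hd
    have hext : (∏ i ∈ d.support, (α ^ q ^ (i : ℕ)) ^ d i)
        = ∏ i : Fin n, (α ^ q ^ (i : ℕ)) ^ d i := by
      refine Finset.prod_subset (Finset.subset_univ _) ?_
      intro i _ hi
      rw [Finsupp.notMem_support_iff.mp hi, pow_zero]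
    rw [hext]
    calc (∏ i : Fin n, (α ^ q ^ (i : ℕ)) ^ d i)
        = ∏ i : Fin n, α ^ (d i * q ^ (i : ℕ)) := by
          refine Finset.prod_congr rfl fun i _ => ?_
          rw [← pow_mul, mul_comm]
      _ = α ^ e d := Finset.prod_pow_eq_pow_sum _ _ _
  have hQeval : Polynomial.aeval α Q = 0 := by
    have h1 : Polynomial.aeval α Q
        = ∑ d ∈ P.support, algebraMap Fq E (MvPolynomial.coeff d P) * α ^ e d := by
      rw [hQ, map_sum]
      refine Finset.sum_congr rfl fun d hd => ?_
      rw [map_mul, map_pow, Polynomial.aeval_C, Polynomial.aeval_X]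
    have h2 : MvPolynomial.aeval (fun i : Fin n => α ^ q ^ (i : ℕ)) P
        = ∑ d ∈ P.support, algebraMap Fq E (MvPolynomial.coeff d P) * α ^ e d := by
      rw [MvPolynomial.aeval_def, MvPolynomial.eval₂_eq]
      exact Finset.sum_congr rfl fun d hd => by rw [hprod d hd]
    rw [h1, ← h2, hPeval]
  -- minimal polynomial facts
  have hMα : Polynomial.aeval α M = 0 := by
    rw [hM, map_mul, Polynomial.aeval_X] at hroot
    rcases mul_eq_zero.mp hroot with h | h
    · exact absurd h hα
    · exact h
  have hint : IsIntegral Fq α := IsAlgebraic.isIntegral ⟨M, hirr.ne_zero, hMα⟩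
  set m := minpoly Fq α with hm
  have hmne : m ≠ 0 := minpoly.ne_zero hint
  have hmM : m ∣ M := minpoly.dvd Fq α hMα
  have hmdeg : m.natDegree = M.natDegree := by
    obtain ⟨u, hu⟩ := hmM
    rcases hirr.isUnit_or_isUnit hu with h | h
    · exact absurd h (minpoly.not_isUnit Fq α)
    · rw [hu, Polynomial.natDegree_mul hmne (fun h0 => by
        rw [h0] at h; exact not_isUnit_zero h),
        Polynomial.natDegree_eq_zero_of_isUnit h, add_zero]
  -- degree of L
  have hcoeffL : L.coeff (q ^ n) = c n := by
    rw [hL, Polynomial.finset_sum_coeff]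
    rw [Finset.sum_eq_single n]
    · simp [Polynomial.coeff_C_mul, Polynomial.coeff_X_pow]
    · intro i hi hne
      have hne' : q ^ n ≠ q ^ i := fun h => hne (Nat.pow_right_injective hq2 h.symm)
      simp [Polynomial.coeff_C_mul, Polynomial.coeff_X_pow, hne']
    · intro h; exact absurd (Finset.self_mem_range_succ n) h
  have hLdegge : q ^ n ≤ L.natDegree :=
    Polynomial.le_natDegree_of_ne_zero (hcoeffL ▸ hn)
  have hLdegle : L.natDegree ≤ q ^ n := by
    rw [hL]
    refine Polynomial.natDegree_sum_le_of_forall_le _ _ fun i hi => ?_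
    refine le_trans (Polynomial.natDegree_C_mul_le _ _) ?_
    rw [Polynomial.natDegree_X_pow]
    exact Nat.pow_le_pow_right (by omega) (Nat.lt_succ_iff.mp (Finset.mem_range.mp hi))
  have hLM : L.natDegree = 1 + M.natDegree := by
    rw [hM, Polynomial.natDegree_mul Polynomial.X_ne_zero hirr.ne_zero,
      Polynomial.natDegree_X]
  have hmq : 1 + m.natDegree = q ^ n := by
    rw [hmdeg, ← hLM]; omega
  -- X does not divide m
  have hXm : ¬ (Polynomial.X ∣ m) := by
    rintro ⟨t, ht⟩
    have hmα : Polynomial.aeval α m = 0 := minpoly.aeval Fq α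
    have ht0 : t ≠ 0 := by
      rintro rfl
      rw [mul_zero] at ht
      exact hmne ht
    have htα : Polynomial.aeval α t = 0 := by
      rw [ht, map_mul, Polynomial.aeval_X] at hmα
      rcases mul_eq_zero.mp hmα with h | h
      · exact absurd h hα
      · exact h
    have hmt : m ∣ t := minpoly.dvd Fq α htα
    have hle := Polynomial.natDegree_le_of_dvd hmt ht0
    have heq : m.natDegree = 1 + t.natDegree := by
      rw [ht, Polynomial.natDegree_mul Polynomial.X_ne_zero ht0, Polynomial.natDegree_X]
    omega
  have hcop : IsCoprime (Polynomial.X : Polynomial Fq) m :=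
    (Polynomial.irreducible_X.coprime_iff_not_dvd).mpr hXm
  -- X divides Q
  have hXQ : Polynomial.X ∣ Q := by
    rw [Polynomial.X_dvd_iff, hQ, Polynomial.finset_sum_coeff]
    refine Finset.sum_eq_zero fun d hd => ?_
    have hed : e d ≠ 0 := by
      intro h0
      have hall : ∀ i ∈ (Finset.univ : Finset (Fin n)), d i * q ^ (i : ℕ) = 0 :=
        (Finset.sum_eq_zero_iff).mp h0
      have hz : ∀ i : Fin n, d i = 0 := by
        intro i
        have := hall i (Finset.mem_univ i)
        have hqp : 0 < q ^ (i : ℕ) := pow_pos (by omega) _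
        rcases Nat.mul_eq_zero.mp this with h | h
        · exact h
        · omega
      have : ∑ i ∈ d.support, d i = 0 := Finset.sum_eq_zero fun i _ => hz i
      have := hdeg d hd
      omega
    have hne0 : (0 : ℕ) ≠ e d := fun h => hed h.symm
    simp [Polynomial.coeff_C_mul, Polynomial.coeff_X_pow, hne0]
  have hmQ : m ∣ Q := minpoly.dvd Fq α hQeval
  have hdvd : Polynomial.X * m ∣ Q := hcop.mul_dvd hXQ hmQ
  have h1 : (Polynomial.X * m).natDegree ≤ Q.natDegree :=
    Polynomial.natDegree_le_of_dvd hdvd hQne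
  have hXmdeg : (Polynomial.X * m).natDegree = q ^ n := by
    rw [Polynomial.natDegree_mul Polynomial.X_ne_zero hmne, Polynomial.natDegree_X]
    omega
  have hQdeg : Q.natDegree ≤ q ^ n - 1 := by
    rw [hQ]
    refine Polynomial.natDegree_sum_le_of_forall_le _ _ fun d hd => ?_
    refine le_trans (Polynomial.natDegree_C_mul_le _ _) ?_
    rw [Polynomial.natDegree_X_pow]
    have h2 : e d < q ^ n := digits_sum_lt_pow q hq2 n (fun i => d i) (hlt d hd)
    omega
  have hq1 : 1 ≤ q ^ n := Nat.one_le_pow _ _ (by omega)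
  omega
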